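/- Let $M$ be a compact smooth $n$-manifold, $Q$ an invertible symmetric real $(n+2)\times(n+2)$ matrix, and $F : M \to \mathbb{R}^{n+2}$ a $C^1$ immersion with image in the cone $\{x : x \cdot Qx = 0\}$. If $F$ has no pair of parallel tangent planes (no distinct $p,q$ with $dF(T_pM) = dF(T_qM)$), then the energy function $\mathcal{E}_F(p,q) = (F(p)-F(q)) \cdot Q(F(p)-F(q))$ vanishes identically on $M \times M$; equivalently, $F(p) \cdot QF(q) = 0$ for all $p, q \in M$. -/

import Mathlib

open Manifold Set Filter Topology Module
open scoped RealInnerProductSpace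

private lemma mfderiv_eq_zero_of_isLocalExtr'
    {n : ℕ} {M : Type*} [TopologicalSpace M]
    [ChartedSpace (EuclideanSpace ℝ (Fin n)) M]
    {g : M → ℝ} {a : M}
    (h : IsLocalExtr g a) :
    mfderiv (𝓡 n) 𝓘(ℝ, ℝ) g a = 0 := by
  by_cases hdiff : MDifferentiableAt (𝓡 n) 𝓘(ℝ, ℝ) g a
  · set e := extChartAt (𝓡 n) a with he
    have htend : Tendsto e.symm (𝓝 (e a)) (𝓝 a) := by
      have := continuousAt_extChartAt_symm (I := 𝓡 n) a
      rwa [ContinuousAt, extChartAt_to_inv] at this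
    have hext : IsLocalExtr (g ∘ e.symm) (e a) := by
      have h' : IsExtrFilter g (𝓝 a) (e.symm (e a)) := by
        rwa [extChartAt_to_inv]
      exact h'.comp_tendsto htend
    have hfd : fderiv ℝ (g ∘ e.symm) (e a) = 0 := hext.fderiv_eq_zero
    simp only [mfderiv, if_pos hdiff]
    have hw : writtenInExtChartAt (𝓡 n) 𝓘(ℝ, ℝ) a g = g ∘ e.symm := by
      simp [writtenInExtChartAt, extChartAt_model_space_eq_id, he, chartAt_self_eq]
    rw [hw]
    rw [(𝓡 n).range_eq_univ, fderivWithin_univ]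
    exact (ite_cond_eq_true _ _ (eq_true hdiff)).trans hfd
  · exact mfderiv_zero_of_not_mdifferentiableAt hdiff


private noncomputable def matCLM {m : ℕ} (Q : Matrix (Fin m) (Fin m) ℝ) :
    EuclideanSpace ℝ (Fin m) →L[ℝ] EuclideanSpace ℝ (Fin m) :=
  LinearMap.toContinuousLinearMap (Matrix.toEuclideanLin Q)

private lemma matCLM_apply {m : ℕ} (Q : Matrix (Fin m) (Fin m) ℝ)
    (x : EuclideanSpace ℝ (Fin m)) : matCLM Q x = Q.mulVec x := rfl

private lemma dot_inner' {m : ℕ} (x y : EuclideanSpace ℝ (Fin m)) :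
    dotProduct x y = ⟪x, y⟫ := by
  simp [PiLp.inner_apply, dotProduct, mul_comm]

private lemma dot_symm' {m : ℕ} {Q : Matrix (Fin m) (Fin m) ℝ} (hQ : Q.IsSymm)
    (x y : Fin m → ℝ) :
    dotProduct x (Q.mulVec y) = dotProduct y (Q.mulVec x) := by
  rw [Matrix.dotProduct_mulVec, ← Matrix.mulVec_transpose, hQ.eq, dotProduct_comm]

private lemma matCLM_symm {m : ℕ} {Q : Matrix (Fin m) (Fin m) ℝ} (hQ : Q.IsSymm)
    (x y : EuclideanSpace ℝ (Fin m)) : ⟪matCLM Q x, y⟫ = ⟪x, matCLM Q y⟫ := by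
  rw [← dot_inner', ← dot_inner', matCLM_apply, matCLM_apply, dotProduct_comm]
  exact dot_symm' hQ y x

private lemma bil_expand {m : ℕ} (Q : Matrix (Fin m) (Fin m) ℝ) (x y : Fin m → ℝ) :
    dotProduct (x - y) (Q.mulVec (x - y)) =
      dotProduct x (Q.mulVec x) - dotProduct x (Q.mulVec y)
        - dotProduct y (Q.mulVec x) + dotProduct y (Q.mulVec y) := by
  simp [sub_dotProduct, dotProduct_sub, Matrix.mulVec_sub]
  ring

set_option maxHeartbeats 800000 in
private lemma constr_lemma
    {n : ℕ} {M : Type*} [TopologicalSpace M]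
    [ChartedSpace (EuclideanSpace ℝ (Fin n)) M]
    (Q : Matrix (Fin (n + 2)) (Fin (n + 2)) ℝ) (hQsymm : Q.IsSymm)
    (F : M → EuclideanSpace ℝ (Fin (n + 2)))
    (hF : ContMDiff (𝓡 n) (𝓡 (n + 2)) 1 F)
    (hQuad : ∀ p : M, dotProduct (F p) (Q.mulVec (F p)) = 0) :
    ∀ (a : M) (w : TangentSpace (𝓡 n) a),
      ⟪matCLM Q (F a), mfderiv (𝓡 n) (𝓡 (n + 2)) F a w⟫ = 0 := by
  have hquad_inner : ∀ a : M, ⟪F a, matCLM Q (F a)⟫ = 0 := by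
    intro a
    rw [← dot_inner']
    exact hQuad a
  intro a w
  have hΦ : HasFDerivAt
      (fun x : EuclideanSpace ℝ (Fin (n + 2)) => ⟪x, matCLM Q x⟫)
      ((fderivInnerCLM ℝ ((F a), matCLM Q (F a))).comp
        ((ContinuousLinearMap.id ℝ (EuclideanSpace ℝ (Fin (n + 2)))).prod (matCLM Q))) (F a) :=
    (hasFDerivAt_id (F a)).inner ℝ (matCLM Q).hasFDerivAt
  have hcomp := mfderiv_comp (I' := 𝓡 (n + 2)) a
    (hΦ.differentiableAt.mdifferentiableAt) ((hF a).mdifferentiableAt one_ne_zero)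
  have h0 : mfderiv (𝓡 n) 𝓘(ℝ, ℝ)
      ((fun x : EuclideanSpace ℝ (Fin (n + 2)) => ⟪x, matCLM Q x⟫) ∘ F) a = 0 := by
    rw [show ((fun x : EuclideanSpace ℝ (Fin (n + 2)) => ⟪x, matCLM Q x⟫) ∘ F)
        = fun _ : M => (0 : ℝ) from funext fun b => hquad_inner b]
    exact mfderiv_const
  rw [h0, mfderiv_eq_fderiv, hΦ.fderiv] at hcomp
  have hz := DFunLike.congr_fun hcomp.symm w
  have hz' : ⟪F a, matCLM Q (mfderiv (𝓡 n) (𝓡 (n + 2)) F a w)⟫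
      + ⟪ContinuousLinearMap.id ℝ (EuclideanSpace ℝ (Fin (n + 2)))
            (mfderiv (𝓡 n) (𝓡 (n + 2)) F a w), matCLM Q (F a)⟫ = 0 := by
    have h3 : fderivInnerCLM ℝ (F a, matCLM Q (F a))
        (ContinuousLinearMap.id ℝ (EuclideanSpace ℝ (Fin (n + 2)))
            (mfderiv (𝓡 n) (𝓡 (n + 2)) F a w),
          matCLM Q (mfderiv (𝓡 n) (𝓡 (n + 2)) F a w)) = 0 := hz
    rw [fderivInnerCLM_apply] at h3
    exact h3
  have h2 : ⟪F a, matCLM Q (mfderiv (𝓡 n) (𝓡 (n + 2)) F a w)⟫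
      = ⟪matCLM Q (F a), mfderiv (𝓡 n) (𝓡 (n + 2)) F a w⟫ := (matCLM_symm hQsymm _ _).symm
  have h4 : ⟪ContinuousLinearMap.id ℝ (EuclideanSpace ℝ (Fin (n + 2)))
      (mfderiv (𝓡 n) (𝓡 (n + 2)) F a w), matCLM Q (F a)⟫
      = ⟪matCLM Q (F a), mfderiv (𝓡 n) (𝓡 (n + 2)) F a w⟫ := by
    rw [real_inner_comm]
    rfl
  rw [h2, h4] at hz'
  linarith

private lemma slice_lemma
    {n : ℕ} {M : Type*} [TopologicalSpace M]
    [ChartedSpace (EuclideanSpace ℝ (Fin n)) M]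
    (F : M → EuclideanSpace ℝ (Fin (n + 2)))
    (hF : ContMDiff (𝓡 n) (𝓡 (n + 2)) 1 F) :
    ∀ (a : M) (c : EuclideanSpace ℝ (Fin (n + 2))),
      IsLocalExtr (fun x : M => ⟪F x, c⟫) a →
      ∀ w : TangentSpace (𝓡 n) a, ⟪c, mfderiv (𝓡 n) (𝓡 (n + 2)) F a w⟫ = 0 := by
  intro a c hex w
  have heq : (fun x : M => ⟪F x, c⟫) = (⇑(innerSL ℝ c)) ∘ F := by
    funext x
    simp only [Function.comp_apply, innerSL_apply_apply]
    exact real_inner_comm _ _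
  rw [heq] at hex
  have h0 := mfderiv_eq_zero_of_isLocalExtr' (n := n) hex
  have hcomp := mfderiv_comp (I' := 𝓡 (n + 2)) a
    ((innerSL ℝ c).mdifferentiableAt (x := F a)) ((hF a).mdifferentiableAt one_ne_zero)
  rw [h0, (innerSL ℝ c).mfderiv_eq] at hcomp
  have hz := DFunLike.congr_fun hcomp.symm w
  exact hz

/-- In the conical case, if a `C¹` immersion `F` of a compact smooth `n`-manifold into
the cone `{x : x ⬝ Q x = 0}` (`Q` invertible symmetric) has no pair of parallel tangent
planes, then the energy `𝓔_F(p,q) = (F p - F q) ⬝ Q (F p - F q)` vanishes identically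
on `M × M`; equivalently `F p ⬝ Q (F q) = 0` for all `p, q`. -/
theorem energy_vanishes_identically_conical_case
    {n : ℕ} {M : Type*} [TopologicalSpace M]
    [ChartedSpace (EuclideanSpace ℝ (Fin n)) M]
    [IsManifold (𝓡 n) (⊤ : ℕ∞) M] [CompactSpace M]
    (Q : Matrix (Fin (n + 2)) (Fin (n + 2)) ℝ)
    (hQsymm : Q.IsSymm) (hQinv : IsUnit Q.det)
    (F : M → EuclideanSpace ℝ (Fin (n + 2)))
    (hF : ContMDiff (𝓡 n) (𝓡 (n + 2)) 1 F)
    (hImm : ∀ p : M, Function.Injective (mfderiv (𝓡 n) (𝓡 (n + 2)) F p))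
    (hQuad : ∀ p : M, dotProduct (F p) (Q.mulVec (F p)) = 0)
    (hnopar : ¬ ∃ p q : M, p ≠ q ∧
      (LinearMap.range (mfderiv (𝓡 n) (𝓡 (n + 2)) F p).toLinearMap :
          Submodule ℝ (EuclideanSpace ℝ (Fin (n + 2)))) =
        (LinearMap.range (mfderiv (𝓡 n) (𝓡 (n + 2)) F q).toLinearMap :
          Submodule ℝ (EuclideanSpace ℝ (Fin (n + 2))))) :
    ∀ p q : M,
      dotProduct (F p - F q) (Q.mulVec (F p - F q)) = 0 ∧
      dotProduct (F p) (Q.mulVec (F q)) = 0 := by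
  intro p₀ q₀
  -- quadric in inner-product form
  have hquad_inner : ∀ a : M, ⟪F a, matCLM Q (F a)⟫ = 0 := by
    intro a
    rw [← dot_inner']
    exact hQuad a
  have hswap : ∀ x z : EuclideanSpace ℝ (Fin (n + 2)),
      ⟪x, matCLM Q z⟫ = ⟪z, matCLM Q x⟫ := by
    intro x z
    rw [← matCLM_symm hQsymm, real_inner_comm]
  have hMD : ∀ a : M, HasMFDerivAt (𝓡 n) (𝓡 (n + 2)) F a
      (mfderiv (𝓡 n) (𝓡 (n + 2)) F a) :=
    fun a => ((hF a).mdifferentiableAt one_ne_zero).hasMFDerivAt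
  have hconstr := constr_lemma Q hQsymm F hF hQuad
  have hslice := slice_lemma (n := n) F hF
  -- key claim: at a point where both slices have local extrema, the energy vanishes
  have key : ∀ a b : M,
      IsLocalExtr (fun x : M => ⟪F x, matCLM Q (F b)⟫) a →
      IsLocalExtr (fun x : M => ⟪F x, matCLM Q (F a)⟫) b →
      ⟪F a, matCLM Q (F b)⟫ = 0 := by
    intro a b hea heb
    by_contra hval
    have hub : ⟪matCLM Q (F a), F b⟫ = ⟪F a, matCLM Q (F b)⟫ := matCLM_symm hQsymm _ _
    have hvb : ⟪matCLM Q (F b), F b⟫ = 0 :=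
      (matCLM_symm hQsymm _ _).trans (hquad_inner b)
    have hua : ⟪matCLM Q (F a), F a⟫ = 0 :=
      (matCLM_symm hQsymm _ _).trans (hquad_inner a)
    have hva : ⟪matCLM Q (F b), F a⟫ = ⟪F a, matCLM Q (F b)⟫ :=
      (matCLM_symm hQsymm _ _).trans (hswap (F b) (F a))
    -- linear independence of the two normals
    have hindep : LinearIndependent ℝ ![matCLM Q (F a), matCLM Q (F b)] := by
      rw [LinearIndependent.pair_iff]
      intro s t hst
      have h1 := congrArg
        (fun z : EuclideanSpace ℝ (Fin (n + 2)) => ⟪z, F b⟫) hst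
      have h2 := congrArg
        (fun z : EuclideanSpace ℝ (Fin (n + 2)) => ⟪z, F a⟫) hst
      simp only [inner_add_left, real_inner_smul_left, inner_zero_left] at h1 h2
      rw [hub, hvb] at h1
      rw [hua, hva] at h2
      constructor
      · have : s * ⟪F a, matCLM Q (F b)⟫ = 0 := by linarith
        exact (mul_eq_zero.1 this).resolve_right hval
      · have : t * ⟪F a, matCLM Q (F b)⟫ = 0 := by linarith
        exact (mul_eq_zero.1 this).resolve_right hval
    have hspan_rank : finrank ℝ (Submodule.span ℝ
        ({matCLM Q (F a), matCLM Q (F b)} : Set (EuclideanSpace ℝ (Fin (n + 2))))) = 2 := by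
      have hr : Set.range ![matCLM Q (F a), matCLM Q (F b)]
          = ({matCLM Q (F a), matCLM Q (F b)} : Set (EuclideanSpace ℝ (Fin (n + 2)))) := by
        simp [Matrix.range_cons, Matrix.range_empty]
        exact Set.pair_comm _ _
      rw [← hr, finrank_span_eq_card hindep]
      simp
    have hKrank : finrank ℝ ((Submodule.span ℝ
        ({matCLM Q (F a), matCLM Q (F b)} : Set (EuclideanSpace ℝ (Fin (n + 2)))))ᗮ) = n := by
      have h := Submodule.finrank_add_finrank_orthogonal
        (K := Submodule.span ℝ
          ({matCLM Q (F a), matCLM Q (F b)} : Set (EuclideanSpace ℝ (Fin (n + 2)))))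
      rw [hspan_rank, finrank_euclideanSpace_fin] at h
      omega
    have hmemK : ∀ w : EuclideanSpace ℝ (Fin (n + 2)),
        ⟪matCLM Q (F a), w⟫ = 0 → ⟪matCLM Q (F b), w⟫ = 0 →
        w ∈ (Submodule.span ℝ
          ({matCLM Q (F a), matCLM Q (F b)} : Set (EuclideanSpace ℝ (Fin (n + 2)))))ᗮ := by
      intro w h1 h2
      rw [Submodule.mem_orthogonal]
      intro z hz
      obtain ⟨s, t, rfl⟩ := Submodule.mem_span_pair.1 hz
      simp only [inner_add_left, real_inner_smul_left, h1, h2]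
      ring
    have hsub : ∀ (c : M), (∀ w : TangentSpace (𝓡 n) c,
          ⟪matCLM Q (F a), mfderiv (𝓡 n) (𝓡 (n + 2)) F c w⟫ = 0 ∧
          ⟪matCLM Q (F b), mfderiv (𝓡 n) (𝓡 (n + 2)) F c w⟫ = 0) →
        (LinearMap.range (mfderiv (𝓡 n) (𝓡 (n + 2)) F c).toLinearMap :
          Submodule ℝ (EuclideanSpace ℝ (Fin (n + 2)))) =
          (Submodule.span ℝ
            ({matCLM Q (F a), matCLM Q (F b)} : Set (EuclideanSpace ℝ (Fin (n + 2)))))ᗮ := by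
      intro c hc
      have hle : (LinearMap.range (mfderiv (𝓡 n) (𝓡 (n + 2)) F c).toLinearMap :
          Submodule ℝ (EuclideanSpace ℝ (Fin (n + 2)))) ≤
          (Submodule.span ℝ
            ({matCLM Q (F a), matCLM Q (F b)} :
              Set (EuclideanSpace ℝ (Fin (n + 2)))))ᗮ := by
        rintro w ⟨t, rfl⟩
        exact hmemK _ (hc t).1 (hc t).2
      apply Submodule.eq_of_le_of_finrank_eq hle
      rw [hKrank]
      have hr : finrank ℝ (LinearMap.range (mfderiv (𝓡 n) (𝓡 (n + 2)) F c).toLinearMap :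
          Submodule ℝ (EuclideanSpace ℝ (Fin (n + 2))))
          = finrank ℝ (TangentSpace (𝓡 n) c) :=
        LinearMap.finrank_range_of_inj (hImm c)
      rw [hr]
      exact finrank_euclideanSpace_fin
    have hra := hsub a (fun w => ⟨hconstr a w, hslice a (matCLM Q (F b)) hea w⟩)
    have hrb := hsub b (fun w => ⟨hslice b (matCLM Q (F a)) heb w, hconstr b w⟩)
    have hab : a ≠ b := by
      intro hEq
      apply hval
      rw [hEq]
      exact hquad_inner b
    exact hnopar ⟨a, b, hab, hra.trans hrb.symm⟩
  -- continuity of the energy-type function on M × M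
  have hfc : Continuous (fun z : M × M => ⟪F z.1, matCLM Q (F z.2)⟫) := by
    have h1 : Continuous fun z : M × M => F z.1 := hF.continuous.comp continuous_fst
    have h2 : Continuous fun z : M × M => matCLM Q (F z.2) :=
      (matCLM Q).continuous.comp (hF.continuous.comp continuous_snd)
    exact h1.inner h2
  -- extrema exist
  obtain ⟨⟨a₁, b₁⟩, -, hmax⟩ := isCompact_univ.exists_isMaxOn
    (⟨(p₀, q₀), mem_univ _⟩ : (univ : Set (M × M)).Nonempty) hfc.continuousOn
  obtain ⟨⟨a₂, b₂⟩, -, hmin⟩ := isCompact_univ.exists_isMinOn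
    (⟨(p₀, q₀), mem_univ _⟩ : (univ : Set (M × M)).Nonempty) hfc.continuousOn
  have hmax' := isMaxOn_iff.1 hmax
  have hmin' := isMinOn_iff.1 hmin
  have hmax1 : IsLocalExtr (fun x : M => ⟪F x, matCLM Q (F b₁)⟫) a₁ := by
    right
    apply IsMaxOn.isLocalMax (s := univ) _ univ_mem
    exact isMaxOn_iff.2 fun x _ => hmax' (x, b₁) (mem_univ _)
  have hmax2 : IsLocalExtr (fun x : M => ⟪F x, matCLM Q (F a₁)⟫) b₁ := by
    right
    apply IsMaxOn.isLocalMax (s := univ) _ univ_mem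
    apply isMaxOn_iff.2
    intro x _
    rw [← hswap, ← hswap (F a₁)]
    exact hmax' (a₁, x) (mem_univ _)
  have hmin1 : IsLocalExtr (fun x : M => ⟪F x, matCLM Q (F b₂)⟫) a₂ := by
    left
    apply IsMinOn.isLocalMin (s := univ) _ univ_mem
    exact isMinOn_iff.2 fun x _ => hmin' (x, b₂) (mem_univ _)
  have hmin2 : IsLocalExtr (fun x : M => ⟪F x, matCLM Q (F a₂)⟫) b₂ := by
    left
    apply IsMinOn.isLocalMin (s := univ) _ univ_mem
    apply isMinOn_iff.2
    intro x _
    rw [← hswap, ← hswap (F a₂)]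
    exact hmin' (a₂, x) (mem_univ _)
  have hmaxzero : ⟪F a₁, matCLM Q (F b₁)⟫ = 0 := key a₁ b₁ hmax1 hmax2
  have hminzero : ⟪F a₂, matCLM Q (F b₂)⟫ = 0 := key a₂ b₂ hmin1 hmin2
  have hall : ∀ a b : M, ⟪F a, matCLM Q (F b)⟫ = 0 := by
    intro a b
    have h1 := hmax' (a, b) (mem_univ _)
    have h2 := hmin' (a, b) (mem_univ _)
    simp only at h1 h2
    rw [hmaxzero] at h1
    rw [hminzero] at h2
    linarith
  have hkeyed : ∀ a b : M, dotProduct (F a) (Q.mulVec (F b)) = 0 := by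
    intro a b
    have h := hall a b
    rw [← dot_inner'] at h
    exact h
  refine ⟨?_, hkeyed p₀ q₀⟩
  calc dotProduct (F p₀ - F q₀) (Q.mulVec (F p₀ - F q₀))
      = dotProduct (F p₀) (Q.mulVec (F p₀)) - dotProduct (F p₀) (Q.mulVec (F q₀))
        - dotProduct (F q₀) (Q.mulVec (F p₀))
        + dotProduct (F q₀) (Q.mulVec (F q₀)) := bil_expand Q (F p₀) (F q₀)
    _ = 0 := by rw [hQuad p₀, hQuad q₀, hkeyed p₀ q₀, hkeyed q₀ p₀]; ring
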